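/- arXiv:math/0503203 — 2 statements merged into one kernel-verified Lean document; each statement's English description precedes it below -/
import Mathlib

section
/- Let v be a splitting vertex of G with N(v) = {v_1,…,v_d}. If the complement graph G^c contains no minimal cycle of length 4 (i.e., no induced 4-cycle), then (vv_1,…,vv_d) ∩ I(G∖{v}) = v·I(G_(v)), where m·I denotes the product of the principal ideal generated by the monomial m with the ideal I. -/
open MvPolynomial

variable {V : Type*}

/-- The graph obtained from `G` by deleting the vertices in `S`
(and all edges incident to them). -/
def delVerts (G : SimpleGraph V) (S : Set V) : SimpleGraph V where
  Adj x y := G.Adj x y ∧ x ∉ S ∧ y ∉ S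
  symm := ⟨fun _ _ h => ⟨h.1.symm, h.2.2, h.2.1⟩⟩
  loopless := ⟨fun _ h => G.irrefl h.1⟩

/-- The graph `G_(v)`: its edges are the edges of the induced subgraph of `G`
on `N(v)` together with all edges of `G` incident to some neighbor of `v` but
not incident to `v`. -/
def splitSub (G : SimpleGraph V) (v : V) : SimpleGraph V where
  Adj x y := G.Adj x y ∧ x ≠ v ∧ y ≠ v ∧ (G.Adj v x ∨ G.Adj v y)
  symm := ⟨fun _ _ h => ⟨h.1.symm, h.2.2.1, h.2.1, h.2.2.2.symm⟩⟩
  loopless := ⟨fun _ h => G.irrefl h.1⟩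

/-- The edge ideal of a simple graph `G`. -/
noncomputable def edgeIdeal (k : Type*) [Field k] (G : SimpleGraph V) :
    Ideal (MvPolynomial V k) :=
  Ideal.span {m | ∃ x y, G.Adj x y ∧ m = X x * X y}

section aux
variable [DecidableEq V]

lemma single_add_single_le {a b : V} (hab : a ≠ b) {m : V →₀ ℕ} :
    Finsupp.single a 1 + Finsupp.single b 1 ≤ m ↔ 1 ≤ m a ∧ 1 ≤ m b := by
  rw [Finsupp.le_def]
  constructor
  · intro h
    constructor
    · have := h a; simpa [Finsupp.single_apply, hab.symm] using this
    · have := h b; simpa [Finsupp.single_apply, hab] using this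
  · rintro ⟨h1, h2⟩ i
    rcases eq_or_ne i a with rfl | hia
    · simpa [Finsupp.single_apply, hab.symm] using h1
    rcases eq_or_ne i b with rfl | hib
    · simpa [Finsupp.single_apply, hab] using h2
    simp [Finsupp.single_apply, hia.symm, hib.symm]

lemma triple_le {a b c : V} (hab : a ≠ b) (hac : a ≠ c) (hbc : b ≠ c) {m : V →₀ ℕ} :
    Finsupp.single a 1 + (Finsupp.single b 1 + Finsupp.single c 1) ≤ m ↔
      1 ≤ m a ∧ 1 ≤ m b ∧ 1 ≤ m c := by
  rw [Finsupp.le_def]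
  constructor
  · intro h
    refine ⟨?_, ?_, ?_⟩
    · have := h a; simpa [Finsupp.single_apply, hab.symm, hac.symm] using this
    · have := h b; simpa [Finsupp.single_apply, hab, hbc.symm] using this
    · have := h c; simpa [Finsupp.single_apply, hac, hbc] using this
  · rintro ⟨h1, h2, h3⟩ i
    rcases eq_or_ne i a with rfl | hia
    · simpa [Finsupp.single_apply, hab.symm, hac.symm] using h1
    rcases eq_or_ne i b with rfl | hib
    · simpa [Finsupp.single_apply, hab, hbc.symm] using h2
    rcases eq_or_ne i c with rfl | hic
    · simpa [Finsupp.single_apply, hac, hbc] using h3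
    simp [Finsupp.single_apply, hia.symm, hib.symm, hic.symm]

lemma edgeIdeal_eq (k : Type*) [Field k] (G : SimpleGraph V) :
    edgeIdeal k G = Ideal.span ((fun s => monomial s (1 : k)) ''
      {d | ∃ x y, G.Adj x y ∧ d = Finsupp.single x 1 + Finsupp.single y 1}) := by
  unfold edgeIdeal
  congr 1
  ext p
  constructor
  · rintro ⟨x, y, h, rfl⟩
    exact ⟨_, ⟨x, y, h, rfl⟩, by simp [X, monomial_mul]⟩
  · rintro ⟨d, ⟨x, y, h, rfl⟩, rfl⟩
    exact ⟨x, y, h, by simp [X, monomial_mul]⟩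

end aux

/-- if `v` is a splitting vertex of `G` with `N(v) = {v₁,…,v_d}`
and the complement `Gᶜ` has no minimal (induced, chordless) cycle of length 4,
then `(v v₁, …, v v_d) ∩ I(G \ {v}) = v·I(G_(v))`. -/
theorem stmt6 (k : Type*) [Field k] [Fintype V] [DecidableEq V]
    (G : SimpleGraph V) (v : V)
    (hdeg : (G.neighborSet v).Nonempty)
    (hsplit : ∃ x y, (delVerts G {v}).Adj x y)
    (hC4 : ¬ ∃ a b c d : V, a ≠ c ∧ b ≠ d ∧
        Gᶜ.Adj a b ∧ Gᶜ.Adj b c ∧ Gᶜ.Adj c d ∧ Gᶜ.Adj d a ∧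
        ¬ Gᶜ.Adj a c ∧ ¬ Gᶜ.Adj b d) :
    Ideal.span ((fun w => (X v * X w : MvPolynomial V k)) '' G.neighborSet v) ⊓
        edgeIdeal k (delVerts G {v}) =
      Ideal.span {(X v : MvPolynomial V k)} * edgeIdeal k (splitSub G v) := by
  -- rewrite all three ideals as monomial-image spans
  have hJ : (fun w => (X v * X w : MvPolynomial V k)) '' G.neighborSet v =
      (fun s => monomial s (1 : k)) ''
        {d | ∃ w, G.Adj v w ∧ d = Finsupp.single v 1 + Finsupp.single w 1} := by
    ext p
    constructor
    · rintro ⟨w, hw, rfl⟩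
      exact ⟨_, ⟨w, hw, rfl⟩, by simp [X, monomial_mul]⟩
    · rintro ⟨d, ⟨w, hw, rfl⟩, rfl⟩
      exact ⟨w, hw, by simp [X, monomial_mul]⟩
  have hR : Ideal.span {(X v : MvPolynomial V k)} * edgeIdeal k (splitSub G v) =
      Ideal.span ((fun s => monomial s (1 : k)) ''
        {d | ∃ x y, (splitSub G v).Adj x y ∧
          d = Finsupp.single v 1 + (Finsupp.single x 1 + Finsupp.single y 1)}) := by
    rw [edgeIdeal_eq, Ideal.span_mul_span', Set.singleton_mul]
    congr 1
    ext p
    constructor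
    · rintro ⟨q, ⟨d, ⟨x, y, h, rfl⟩, rfl⟩, rfl⟩
      exact ⟨_, ⟨x, y, h, rfl⟩, by simp [X, monomial_mul]⟩
    · rintro ⟨d, ⟨x, y, h, rfl⟩, rfl⟩
      refine ⟨monomial (Finsupp.single x 1 + Finsupp.single y 1) (1 : k),
        ⟨_, ⟨x, y, h, rfl⟩, rfl⟩, ?_⟩
      simp [X, monomial_mul]
  rw [hJ, hR, edgeIdeal_eq]
  ext f
  rw [Submodule.mem_inf, mem_ideal_span_monomial_image, mem_ideal_span_monomial_image,
    mem_ideal_span_monomial_image, ← forall_and]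
  apply forall_congr'
  intro m
  rw [← imp_and]
  apply imp_congr_right
  intro _
  constructor
  · rintro ⟨⟨a, ⟨w, hw, rfl⟩, ha⟩, ⟨b, ⟨x, y, hxy, rfl⟩, hb⟩⟩
    -- hw : G.Adj v w ; hxy : (delVerts G {v}).Adj x y
    obtain ⟨hGxy, hx, hy⟩ := hxy
    simp only [Set.mem_singleton_iff] at hx hy
    have hwv : w ≠ v := (G.ne_of_adj hw).symm
    rw [single_add_single_le (Ne.symm hwv)] at ha
    rw [single_add_single_le (G.ne_of_adj hGxy)] at hb
    by_cases hvx : G.Adj v x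
    · refine ⟨_, ⟨x, y, ⟨hGxy, hx, hy, Or.inl hvx⟩, rfl⟩, ?_⟩
      rw [triple_le (Ne.symm hx) (Ne.symm hy) (G.ne_of_adj hGxy)]
      exact ⟨ha.1, hb.1, hb.2⟩
    by_cases hvy : G.Adj v y
    · refine ⟨_, ⟨x, y, ⟨hGxy, hx, hy, Or.inr hvy⟩, rfl⟩, ?_⟩
      rw [triple_le (Ne.symm hx) (Ne.symm hy) (G.ne_of_adj hGxy)]
      exact ⟨ha.1, hb.1, hb.2⟩
    -- now w ∉ {x, y}
    have hwx : w ≠ x := fun h => hvx (h ▸ hw)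
    have hwy : w ≠ y := fun h => hvy (h ▸ hw)
    by_cases hWx : G.Adj w x
    · refine ⟨_, ⟨w, x, ⟨hWx, hwv, hx, Or.inl hw⟩, rfl⟩, ?_⟩
      rw [triple_le (Ne.symm hwv) (Ne.symm hx) hwx]
      exact ⟨ha.1, ha.2, hb.1⟩
    by_cases hWy : G.Adj w y
    · refine ⟨_, ⟨w, y, ⟨hWy, hwv, hy, Or.inl hw⟩, rfl⟩, ?_⟩
      rw [triple_le (Ne.symm hwv) (Ne.symm hy) hwy]
      exact ⟨ha.1, ha.2, hb.2⟩
    -- contradiction: induced C4 in Gᶜ on (v, x, w, y)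
    exfalso
    apply hC4
    refine ⟨v, x, w, y, hwv.symm, G.ne_of_adj hGxy, ?_, ?_, ?_, ?_, ?_, ?_⟩
    · exact ⟨Ne.symm hx, hvx⟩
    · exact ⟨hwx.symm, fun h => hWx h.symm⟩
    · exact ⟨hwy, hWy⟩
    · exact ⟨hy, fun h => hvy h.symm⟩
    · simp only [SimpleGraph.compl_adj, not_and, not_not]
      intro _; exact hw
    · simp only [SimpleGraph.compl_adj, not_and, not_not]
      intro _; exact hGxy
  · rintro ⟨c, ⟨x, y, ⟨hGxy, hx, hy, hv⟩, rfl⟩, hc⟩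
    rw [triple_le (Ne.symm hx) (Ne.symm hy) (G.ne_of_adj hGxy)] at hc
    constructor
    · rcases hv with hvx | hvy
      · refine ⟨_, ⟨x, hvx, rfl⟩, ?_⟩
        rw [single_add_single_le (Ne.symm hx)]
        exact ⟨hc.1, hc.2.1⟩
      · refine ⟨_, ⟨y, hvy, rfl⟩, ?_⟩
        rw [single_add_single_le (Ne.symm hy)]
        exact ⟨hc.1, hc.2.2⟩
    · refine ⟨_, ⟨x, y, ⟨hGxy, hx, hy⟩, rfl⟩, ?_⟩
      rw [single_add_single_le (G.ne_of_adj hGxy)]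
      exact ⟨hc.2.1, hc.2.2⟩
end

section
/- Let Δ be a simplicial complex with at least two facets and let F be a leaf of Δ. Then F is a splitting facet of Δ; that is, I(Δ) = (F) + I(Δ∖F) is a splitting of I(Δ). -/
open MvPolynomial

variable {V : Type*}

/-- The facet ideal of the simplicial complex with facet set `Δ`. -/
noncomputable def facetIdeal (k : Type*) [Field k] [DecidableEq V]
    (Δ : Set (Finset V)) : Ideal (MvPolynomial V k) :=
  Ideal.span ((fun F : Finset V => ∏ x ∈ F, X x) '' Δ)

/-- A facet `F` of `Δ` is a leaf if either `F` is the only facet, or there is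
a facet `G ≠ F` with `F ∩ F' ⊆ F ∩ G` for every facet `F' ≠ F`. -/
def IsLeaf [DecidableEq V] (Δ : Set (Finset V)) (F : Finset V) : Prop :=
  F ∈ Δ ∧ (Δ = {F} ∨ ∃ G ∈ Δ, G ≠ F ∧ ∀ F' ∈ Δ, F' ≠ F → F ∩ F' ⊆ F ∩ G)

/-- A (monic) monomial in a multivariate polynomial ring. -/
def IsMonomial {k : Type*} [Field k] (m : MvPolynomial V k) : Prop :=
  ∃ s : V →₀ ℕ, m = monomial s 1

/-- A monomial ideal: an ideal generated by a set of (monic) monomials. -/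
def IsMonomialIdeal {k : Type*} [Field k] (I : Ideal (MvPolynomial V k)) : Prop :=
  ∃ S : Set (MvPolynomial V k), (∀ m ∈ S, IsMonomial m) ∧ I = Ideal.span S

/-- The set of minimal (monic) monomial generators of a monomial ideal `I`. -/
def minGens {k : Type*} [Field k] (I : Ideal (MvPolynomial V k)) :
    Set (MvPolynomial V k) :=
  {m | IsMonomial m ∧ m ∈ I ∧
    ∀ m' : MvPolynomial V k, IsMonomial m' → m' ∣ m → m' ≠ m → m' ∉ I}

/-- `L` is the (monic) least common multiple of the set of monomials `S`. -/
def IsLcmOf {k : Type*} [Field k] (S : Set (MvPolynomial V k))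
    (L : MvPolynomial V k) : Prop :=
  IsMonomial L ∧ (∀ m ∈ S, m ∣ L) ∧
    ∀ L' : MvPolynomial V k, IsMonomial L' → (∀ m ∈ S, m ∣ L') → L ∣ L'

/-- Eliahou–Kervaire splitting of a monomial ideal. -/
def IsSplitting {k : Type*} [Field k] (I J K : Ideal (MvPolynomial V k)) : Prop :=
  IsMonomialIdeal J ∧ IsMonomialIdeal K ∧ J ≠ ⊥ ∧ K ≠ ⊥ ∧ I = J + K ∧
  minGens I = minGens J ∪ minGens K ∧ Disjoint (minGens J) (minGens K) ∧
  ∃ φ ψ : MvPolynomial V k → MvPolynomial V k,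
    (∀ w ∈ minGens (J ⊓ K), φ w ∈ minGens J ∧ ψ w ∈ minGens K ∧
        IsLcmOf {φ w, ψ w} w) ∧
    (∀ S ⊆ minGens (J ⊓ K), S.Nonempty →
      ∀ L Lφ Lψ : MvPolynomial V k, IsLcmOf S L → IsLcmOf (φ '' S) Lφ →
        IsLcmOf (ψ '' S) Lψ → (Lφ ∣ L ∧ Lφ ≠ L) ∧ (Lψ ∣ L ∧ Lψ ≠ L))

section Helpers
variable {k : Type*} [Field k] [DecidableEq V]

noncomputable def ind (A : Finset V) : V →₀ ℕ := ∑ x ∈ A, Finsupp.single x 1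

lemma ind_apply (A : Finset V) (x : V) : ind A x = if x ∈ A then 1 else 0 := by
  classical
  rw [ind, Finsupp.finset_sum_apply]
  simp [Finsupp.single_apply]

lemma ind_le_iff {A : Finset V} {s : V →₀ ℕ} : ind A ≤ s ↔ ∀ x ∈ A, 1 ≤ s x := by
  rw [Finsupp.le_def]
  constructor
  · intro h x hx
    have := h x
    rwa [ind_apply, if_pos hx] at this
  · intro h x
    rw [ind_apply]
    split_ifs with hx
    · exact h x hx
    · exact Nat.zero_le _

lemma ind_le_ind {A B : Finset V} : ind A ≤ ind B ↔ A ⊆ B := by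
  rw [ind_le_iff]
  constructor
  · intro h x hx
    have h2 := h x hx
    rw [ind_apply] at h2
    by_contra hxB
    simp [hxB] at h2
  · intro h x hx
    rw [ind_apply, if_pos (h hx)]

lemma ind_inj {A B : Finset V} (h : ind A = ind B) : A = B :=
  Finset.Subset.antisymm (ind_le_ind.mp h.le) (ind_le_ind.mp h.ge)

noncomputable def mono (k : Type*) [Field k] [DecidableEq V] (A : Finset V) :
    MvPolynomial V k := monomial (ind A) 1

lemma X_eq_monomial (n : V) :
    (X n : MvPolynomial V k) = monomial (Finsupp.single n 1) 1 := rfl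

lemma prod_X_eq (A : Finset V) : (∏ x ∈ A, X x : MvPolynomial V k) = mono k A := by
  classical
  induction A using Finset.induction_on with
  | empty => simp [mono, ind]
  | insert a s h ih =>
      rw [Finset.prod_insert h, ih, mono, mono, ind, ind, Finset.sum_insert h,
        X_eq_monomial, monomial_mul, one_mul]

lemma monomial_one_dvd {s t : V →₀ ℕ} :
    monomial s (1 : k) ∣ monomial t (1 : k) ↔ s ≤ t := by
  rw [monomial_dvd_monomial]
  simp [one_ne_zero]

lemma mono_dvd_mono {A B : Finset V} : mono k A ∣ mono k B ↔ A ⊆ B := by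
  rw [mono, mono, monomial_one_dvd, ind_le_ind]

lemma mono_inj {A B : Finset V} (h : mono k A = mono k B) : A = B :=
  ind_inj (monomial_left_injective (one_ne_zero (α := k)) h)

lemma mono_ne_zero {A : Finset V} : mono k A ≠ 0 := by
  rw [mono, Ne, monomial_eq_zero]
  exact one_ne_zero

lemma facetIdeal_eq (Δ : Set (Finset V)) :
    facetIdeal k Δ = Ideal.span ((fun s => monomial s (1 : k)) '' (ind '' Δ)) := by
  rw [facetIdeal, Set.image_image]
  congr 1
  exact Set.image_congr fun F _ => prod_X_eq F

lemma monomial_mem_facetIdeal {Δ : Set (Finset V)} {s : V →₀ ℕ} :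
    monomial s (1 : k) ∈ facetIdeal k Δ ↔ ∃ G ∈ Δ, ind G ≤ s := by
  classical
  rw [facetIdeal_eq, mem_ideal_span_monomial_image, support_monomial,
    if_neg (one_ne_zero (α := k))]
  simp

lemma minGens_facetIdeal {Δ : Set (Finset V)} (hac : IsAntichain (· ⊆ ·) Δ) :
    minGens (facetIdeal k Δ) = mono k '' Δ := by
  ext w
  constructor
  · rintro ⟨⟨s, rfl⟩, hmem, hmin⟩
    obtain ⟨G, hG, hle⟩ := monomial_mem_facetIdeal.mp hmem
    have hdvd : mono k G ∣ monomial s (1 : k) := by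
      rw [mono, monomial_one_dvd]; exact hle
    by_cases heq : mono k G = monomial s (1 : k)
    · exact ⟨G, hG, heq⟩
    · exact absurd (monomial_mem_facetIdeal.mpr ⟨G, hG, le_rfl⟩)
        (hmin _ ⟨_, rfl⟩ hdvd heq)
  · rintro ⟨G, hG, rfl⟩
    refine ⟨⟨_, rfl⟩, monomial_mem_facetIdeal.mpr ⟨G, hG, le_rfl⟩, ?_⟩
    rintro m' ⟨t, rfl⟩ hdvd hne hmem
    rw [mono] at hdvd
    have ht : t ≤ ind G := monomial_one_dvd.mp hdvd
    obtain ⟨G', hG', hle'⟩ := monomial_mem_facetIdeal.mp hmem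
    have hGG : G' ⊆ G := ind_le_ind.mp (hle'.trans ht)
    by_cases hGeq : G' = G
    · subst hGeq
      exact hne (by rw [mono, le_antisymm ht hle'])
    · exact hac hG' hG hGeq hGG

end Helpers

/-- if `Δ` is a simplicial complex with at least two facets and
`F` is a leaf of `Δ`, then `F` is a splitting facet of `Δ`: the decomposition
`I(Δ) = (F) + I(Δ \ F)` is a splitting of `I(Δ)`. -/
theorem stmt10 (k : Type*) [Field k] [Fintype V] [DecidableEq V]
    (Δ : Set (Finset V)) (hne : ∀ F ∈ Δ, F.Nonempty)
    (hac : IsAntichain (· ⊆ ·) Δ)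
    (htwo : ∃ A ∈ Δ, ∃ B ∈ Δ, A ≠ B)
    (F : Finset V) (hleaf : IsLeaf Δ F) :
    IsSplitting (facetIdeal k Δ)
      (Ideal.span {(∏ x ∈ F, X x : MvPolynomial V k)})
      (facetIdeal k (Δ \ {F})) := by
  classical
  obtain ⟨hF, hor⟩ := hleaf
  obtain ⟨A, hA, B, hB, hAB⟩ := htwo
  obtain ⟨G₀, hG₀Δ, hG₀F, hG₀⟩ :
      ∃ G ∈ Δ, G ≠ F ∧ ∀ F' ∈ Δ, F' ≠ F → F ∩ F' ⊆ F ∩ G := by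
    rcases hor with h | h
    · exfalso
      rw [h, Set.mem_singleton_iff] at hA hB
      exact hAB (hA.trans hB.symm)
    · exact h
  set J : Ideal (MvPolynomial V k) :=
    Ideal.span {(∏ x ∈ F, X x : MvPolynomial V k)} with hJdef
  set K : Ideal (MvPolynomial V k) := facetIdeal k (Δ \ {F}) with hKdef
  have hJ : J = facetIdeal k ({F} : Set (Finset V)) := by
    rw [hJdef, facetIdeal, Set.image_singleton]
  have hacF : IsAntichain (· ⊆ ·) ({F} : Set (Finset V)) :=
    Set.subsingleton_singleton.isAntichain _
  have hacK : IsAntichain (· ⊆ ·) (Δ \ {F}) := hac.subset Set.diff_subset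
  have hmJ : minGens J = {mono k F} := by
    rw [hJ, minGens_facetIdeal hacF, Set.image_singleton]
  have hmK : minGens K = mono k '' (Δ \ {F}) := minGens_facetIdeal hacK
  have hmI : minGens (facetIdeal k Δ) = mono k '' Δ := minGens_facetIdeal hac
  have hunion : ({F} : Set (Finset V)) ∪ (Δ \ {F}) = Δ :=
    Set.union_diff_cancel (Set.singleton_subset_iff.mpr hF)
  have hmemJ : ∀ s : V →₀ ℕ, monomial s (1 : k) ∈ J ↔ ind F ≤ s := by
    intro s
    rw [hJ, monomial_mem_facetIdeal]
    simp
  have hshape : ∀ w ∈ minGens (J ⊓ K),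
      ∃ G, G ∈ Δ ∧ G ≠ F ∧ w = mono k (F ∪ G) := by
    rintro w ⟨⟨s, rfl⟩, hmem, hmin⟩
    rw [Submodule.mem_inf] at hmem
    obtain ⟨hJm, hKm⟩ := hmem
    have hFle : ind F ≤ s := (hmemJ s).mp hJm
    obtain ⟨G, hG, hleG⟩ := monomial_mem_facetIdeal.mp hKm
    have hGΔ : G ∈ Δ := hG.1
    have hGF : G ≠ F := by simpa using hG.2
    have hUle : ind (F ∪ G) ≤ s := ind_le_iff.mpr fun x hx => by
      rcases Finset.mem_union.mp hx with h | h
      · exact ind_le_iff.mp hFle x h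
      · exact ind_le_iff.mp hleG x h
    have hWmem : mono k (F ∪ G) ∈ J ⊓ K := by
      rw [Submodule.mem_inf]
      exact ⟨(hmemJ _).mpr (ind_le_ind.mpr Finset.subset_union_left),
        monomial_mem_facetIdeal.mpr ⟨G, hG, ind_le_ind.mpr Finset.subset_union_right⟩⟩
    by_cases heq : mono k (F ∪ G) = monomial s (1 : k)
    · exact ⟨G, hGΔ, hGF, heq.symm⟩
    · exact absurd hWmem
        (hmin _ ⟨_, rfl⟩ (by rw [mono]; exact monomial_one_dvd.mpr hUle) heq)
  refine ⟨⟨{mono k F}, ?_, ?_⟩, ⟨mono k '' (Δ \ {F}), ?_, ?_⟩, ?_, ?_, ?_, ?_, ?_,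
    fun _ => mono k F,
    fun w => if h : ∃ G, G ∈ Δ ∧ G ≠ F ∧ w = mono k (F ∪ G)
      then mono k h.choose else 1, ?_, ?_⟩
  · rintro m hm
    rw [Set.mem_singleton_iff] at hm
    exact ⟨_, hm⟩
  · rw [hJdef, prod_X_eq]
  · rintro m ⟨G, -, rfl⟩
    exact ⟨_, rfl⟩
  · rw [hKdef, facetIdeal]
    congr 1
    exact Set.image_congr fun G _ => prod_X_eq G
  · rw [hJdef, Ne, Ideal.span_singleton_eq_bot, prod_X_eq]
    exact mono_ne_zero
  · intro hbot
    have hm : mono k G₀ ∈ K :=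
      monomial_mem_facetIdeal.mpr ⟨G₀, ⟨hG₀Δ, by simp [hG₀F]⟩, le_rfl⟩
    rw [hbot] at hm
    exact mono_ne_zero ((Submodule.mem_bot _).mp hm)
  · have himg : ({(∏ x ∈ F, X x : MvPolynomial V k)} : Set (MvPolynomial V k)) =
        (fun F : Finset V => ∏ x ∈ F, X x) '' {F} := by rw [Set.image_singleton]
    rw [facetIdeal, hJdef, hKdef, facetIdeal, himg, Ideal.add_eq_sup, ← Ideal.span_union,
      ← Set.image_union, hunion]
  · rw [hmI, hmJ, hmK]
    nth_rewrite 1 [← hunion]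
    rw [Set.image_union, Set.image_singleton]
  · rw [hmJ, hmK, Set.disjoint_left]
    rintro m hm ⟨G, hG, hEq⟩
    rw [Set.mem_singleton_iff] at hm
    subst hm
    exact hG.2 (by simp [mono_inj hEq])
  · intro w hw
    have h := hshape w hw
    obtain ⟨G, hGΔ, hGF, hwEq, hψEq⟩ :
        ∃ G, G ∈ Δ ∧ G ≠ F ∧ w = mono k (F ∪ G) ∧
          (if h' : ∃ G, G ∈ Δ ∧ G ≠ F ∧ w = mono k (F ∪ G)
            then mono k h'.choose else 1) = mono k G :=
      ⟨h.choose, h.choose_spec.1, h.choose_spec.2.1, h.choose_spec.2.2,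
        dif_pos h⟩
    refine ⟨?_, ?_, ?_⟩
    · rw [hmJ]
      rfl
    · show (if h' : ∃ G, G ∈ Δ ∧ G ≠ F ∧ w = mono k (F ∪ G)
          then mono k h'.choose else 1) ∈ minGens K
      rw [hψEq, hmK]
      exact ⟨G, ⟨hGΔ, by simp [hGF]⟩, rfl⟩
    · show IsLcmOf {mono k F,
        if h' : ∃ G, G ∈ Δ ∧ G ≠ F ∧ w = mono k (F ∪ G)
          then mono k h'.choose else 1} w
      rw [hψEq, hwEq]
      refine ⟨⟨_, rfl⟩, ?_, ?_⟩
      · rintro m hm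
        rcases hm with rfl | hm
        · exact mono_dvd_mono.mpr Finset.subset_union_left
        · rw [Set.mem_singleton_iff] at hm
          subst hm
          exact mono_dvd_mono.mpr Finset.subset_union_right
      · rintro L' ⟨t, rfl⟩ hdiv
        have h1 : ind F ≤ t := monomial_one_dvd.mp (hdiv _ (Set.mem_insert _ _))
        have h2 : ind G ≤ t :=
          monomial_one_dvd.mp (hdiv _ (Set.mem_insert_of_mem _ rfl))
        have hle : ind (F ∪ G) ≤ t := ind_le_iff.mpr fun x hx => by
          rcases Finset.mem_union.mp hx with hx | hx
          · exact ind_le_iff.mp h1 x hx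
          · exact ind_le_iff.mp h2 x hx
        rw [mono]
        exact monomial_one_dvd.mpr hle
  · intro S hSsub hSne L Lφ Lψ hL hLφ hLψ
    obtain ⟨w₀, hw₀⟩ := hSne
    have hfact : ∀ w ∈ S, ∃ G, G ∈ Δ ∧ G ≠ F ∧ w = mono k (F ∪ G) ∧
        (if h' : ∃ G, G ∈ Δ ∧ G ≠ F ∧ w = mono k (F ∪ G)
          then mono k h'.choose else 1) = mono k G := by
      intro w hw
      have h := hshape w (hSsub hw)
      exact ⟨h.choose, h.choose_spec.1, h.choose_spec.2.1, h.choose_spec.2.2,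
        dif_pos h⟩
    obtain ⟨s, hLs⟩ := hL.1
    subst hLs
    obtain ⟨tψ, hLψs⟩ := hLψ.1
    subst hLψs
    obtain ⟨tφ, hLφs⟩ := hLφ.1
    subst hLφs
    have hφS : (fun _ : MvPolynomial V k => mono k F) '' S = {mono k F} :=
      Set.Nonempty.image_const ⟨w₀, hw₀⟩ _
    have hLφ1 : ind F ≤ tφ := by
      have := hLφ.2.1 (mono k F) (by rw [hφS]; rfl)
      rw [mono] at this
      exact monomial_one_dvd.mp this
    have hLφ2 : tφ ≤ ind F := by
      have := hLφ.2.2 (mono k F) ⟨_, rfl⟩ (by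
        rintro m hm
        rw [hφS, Set.mem_singleton_iff] at hm
        subst hm
        exact dvd_rfl)
      rw [mono] at this
      exact monomial_one_dvd.mp this
    have hLφeq : monomial tφ (1 : k) = mono k F := by
      rw [mono, le_antisymm hLφ2 hLφ1]
    obtain ⟨G₁, hG₁Δ, hG₁F, hw₀eq, hψw₀⟩ := hfact w₀ hw₀
    have hw₀L : mono k (F ∪ G₁) ∣ monomial s (1 : k) := by
      rw [← hw₀eq]
      exact hL.2.1 w₀ hw₀
    constructor
    · constructor
      · rw [hLφeq]
        exact (mono_dvd_mono.mpr Finset.subset_union_left).trans hw₀L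
      · rw [hLφeq]
        intro hEq
        have : mono k (F ∪ G₁) ∣ mono k F := hEq ▸ hw₀L
        have hsub : G₁ ⊆ F :=
          Finset.subset_union_right.trans (mono_dvd_mono.mp this)
        exact hac hG₁Δ hF hG₁F hsub
    · have hLψL : monomial tψ (1 : k) ∣ monomial s (1 : k) := by
        refine hLψ.2.2 _ ⟨s, rfl⟩ ?_
        rintro m ⟨w, hw, rfl⟩
        obtain ⟨G, hGΔ, hGF, hweq, hψw⟩ := hfact w hw
        beta_reduce
        rw [hψw]
        have hd : mono k G ∣ w := by
          rw [hweq]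
          exact mono_dvd_mono.mpr Finset.subset_union_right
        exact hd.trans (hL.2.1 w hw)
      refine ⟨hLψL, ?_⟩
      intro hEq
      have hts : tψ = s := monomial_left_injective (one_ne_zero (α := k)) hEq
      subst hts
      set U : Finset V := Finset.univ.filter
        (fun x => ∃ w ∈ S, ∃ G, G ∈ Δ ∧ G ≠ F ∧ x ∈ G ∧
          (if h' : ∃ G, G ∈ Δ ∧ G ≠ F ∧ w = mono k (F ∪ G)
            then mono k h'.choose else (1 : MvPolynomial V k)) = mono k G)
        with hUdef
      have hLψU : monomial tψ (1 : k) ∣ mono k U := by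
        refine hLψ.2.2 _ ⟨_, rfl⟩ ?_
        rintro m ⟨w, hw, rfl⟩
        obtain ⟨G, hGΔ, hGF, hweq, hψw⟩ := hfact w hw
        beta_reduce
        rw [hψw]
        refine mono_dvd_mono.mpr fun x hx => ?_
        rw [hUdef]
        exact Finset.mem_filter.mpr ⟨Finset.mem_univ _, w, hw, G, hGΔ, hGF, hx, hψw⟩
      have htU : tψ ≤ ind U := by
        rw [mono] at hLψU
        exact monomial_one_dvd.mp hLψU
      have hFs : ∀ x ∈ F, 1 ≤ tψ x := fun x hx =>
        ind_le_iff.mp (by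
          rw [mono] at hw₀L
          exact monomial_one_dvd.mp hw₀L) x (Finset.mem_union_left _ hx)
      have hFU : F ⊆ U := by
        intro x hx
        have h1 : 1 ≤ tψ x := hFs x hx
        have h2 : tψ x ≤ ind U x := htU x
        rw [ind_apply] at h2
        by_contra hxU
        rw [if_neg hxU] at h2
        omega
      have hFG₀ : F ⊆ G₀ := by
        intro x hx
        have hxU := hFU hx
        rw [hUdef, Finset.mem_filter] at hxU
        obtain ⟨-, w, hw, G, hGΔ, hGF, hxG, -⟩ := hxU
        exact (Finset.mem_inter.mp
          (hG₀ G hGΔ hGF (Finset.mem_inter.mpr ⟨hx, hxG⟩))).2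
      exact hac hF hG₀Δ (Ne.symm hG₀F) hFG₀
end
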